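/- Discrete Poincaré inequality: Let ζ be a general (ρ_1,ρ_2)-admissible point set, ε > 0, A a bounded Lipschitz open set, and let w be a continuous piecewise-affine function on the Delaunay triangulation of εζ vanishing on the boundary region (w = 0 on all vertices x ∈ εζ not in the interior of the union of Delaunay cells contained in A). Assume each vertex x ∈ closure(A) ∩ εζ is joined to a boundary vertex by a path on the Delaunay graph with O(ε^{-1}) steps, with each edge used by at most O(ε^{-1}) paths. Then Σ_{x ∈ closure(A) ∩ εζ} ε^d |w(x)|^p ≤ C Σ_{edges {x,y} ⊂ closure(A)} ε^d (|w(y) − w(x)|/|y − x|)^p, with C depending on A, d, p, ρ_1, ρ_2 but not on ε. -/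

import Mathlib

open Metric Set MeasureTheory
open scoped BigOperators

noncomputable section

/-- Hard-core condition with parameter `ρ₁`. -/
def HardCore {m : ℕ} (ρ₁ : ℝ) (ζ : Set (EuclideanSpace ℝ (Fin m))) : Prop :=
  ∀ x ∈ ζ, ∀ y ∈ ζ, x ≠ y → ρ₁ ≤ dist x y

/-- Empty-space condition with parameter `ρ₂`. -/
def EmptySpace {m : ℕ} (ρ₂ : ℝ) (ζ : Set (EuclideanSpace ℝ (Fin m))) : Prop :=
  ∀ z : EuclideanSpace ℝ (Fin m), ∃ y ∈ ζ, dist z y < ρ₂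

/-- General position in `ℝ^{d+1}`. -/
def IsGeneral {d : ℕ} (ζ : Set (EuclideanSpace ℝ (Fin (d + 1)))) : Prop :=
  (∀ s : Finset (EuclideanSpace ℝ (Fin (d + 1))), ↑s ⊆ ζ → s.card = d + 2 →
    ¬ ∃ (f : EuclideanSpace ℝ (Fin (d + 1)) →ₗ[ℝ] ℝ) (a : ℝ), f ≠ 0 ∧ ∀ x ∈ s, f x = a) ∧
  (∀ s : Finset (EuclideanSpace ℝ (Fin (d + 1))), ↑s ⊆ ζ → s.card = d + 3 →
    ¬ ∃ (c : EuclideanSpace ℝ (Fin (d + 1))) (r : ℝ), ∀ x ∈ s, dist x c = r)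

/-- A Delaunay simplex of `ζ ⊆ ℝ^{d+1}` given by its vertex set. -/
def IsDSimplex {d : ℕ} (ζ : Set (EuclideanSpace ℝ (Fin (d + 1))))
    (s : Finset (EuclideanSpace ℝ (Fin (d + 1)))) : Prop :=
  ↑s ⊆ ζ ∧ s.card = d + 2 ∧
  ∃ (c : EuclideanSpace ℝ (Fin (d + 1))) (r : ℝ),
    (∀ x ∈ s, dist x c = r) ∧ ∀ z ∈ ζ, r ≤ dist z c

/-- Delaunay neighbour pairs. -/
def IsDEdge {d : ℕ} (ζ : Set (EuclideanSpace ℝ (Fin (d + 1))))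
    (x y : EuclideanSpace ℝ (Fin (d + 1))) : Prop :=
  x ≠ y ∧ ∃ s : Finset (EuclideanSpace ℝ (Fin (d + 1))), IsDSimplex ζ s ∧ x ∈ s ∧ y ∈ s

/-- The rescaled point set `ε ζ`. -/
def scaleSet {m : ℕ} (ε : ℝ) (ζ : Set (EuclideanSpace ℝ (Fin m))) :
    Set (EuclideanSpace ℝ (Fin m)) := (fun x => ε • x) '' ζ

/-- Delaunay edges of `ζ` contained (as segments) in the closure of `A`. -/
def edgeRel {d : ℕ} (ζ A : Set (EuclideanSpace ℝ (Fin (d + 1))))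
    (x y : EuclideanSpace ℝ (Fin (d + 1))) : Prop :=
  IsDEdge ζ x y ∧ segment ℝ x y ⊆ closure A

/-- Vertices of `ζ` lying in `closure A` but not in the interior of the union of the
Delaunay cells contained in `A` ("boundary vertices"). -/
def bdryVerts {d : ℕ} (ζ A : Set (EuclideanSpace ℝ (Fin (d + 1)))) :
    Set (EuclideanSpace ℝ (Fin (d + 1))) :=
  {x ∈ ζ | x ∈ closure A ∧
    x ∉ interior (⋃ s ∈ {s | IsDSimplex ζ s ∧
        convexHull ℝ (↑s : Set (EuclideanSpace ℝ (Fin (d + 1)))) ⊆ A},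
      convexHull ℝ (↑s : Set (EuclideanSpace ℝ (Fin (d + 1)))))}

/-- A bounded measurable set of `ℝ^{d+1}` with Lipschitz boundary. -/
def IsLipschitzSet {d : ℕ} (D : Set (EuclideanSpace ℝ (Fin (d + 1)))) : Prop :=
  Bornology.IsBounded D ∧ MeasurableSet D ∧
  ∃ (m : ℕ) (U : Fin m → Set (EuclideanSpace ℝ (Fin (d + 1)))),
    frontier D ⊆ (⋃ k, U k) ∧
    ∀ k, (∃ V : Set (EuclideanSpace ℝ (Fin (d + 1))), IsOpen V ∧ U k = V ∩ frontier D) ∧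
      ∃ (e : EuclideanSpace ℝ (Fin (d + 1)) ≃ₗᵢ[ℝ] EuclideanSpace ℝ (Fin (d + 1)))
        (L : NNReal) (f : EuclideanSpace ℝ (Fin d) → ℝ),
        LipschitzWith L f ∧
        ∀ x ∈ U k, e x (Fin.last d) =
          f (show EuclideanSpace ℝ (Fin d) from WithLp.toLp 2 fun i : Fin d => e x i.castSucc)


section Helpers

lemma walk_of_chain' {V : Type*} (G : SimpleGraph V) :
    ∀ (l : List V) (a : V), List.Chain' G.Adj (a :: l) →
      ∃ W : G.Walk a ((a :: l).getLast (List.cons_ne_nil a l)), W.support = a :: l := by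
  intro l
  induction l with
  | nil => exact fun a _ => ⟨SimpleGraph.Walk.nil.copy rfl (by simp), by simp⟩
  | cons b t ih =>
    intro a h
    simp only [List.Chain', List.isChain_cons_cons] at h
    obtain ⟨W', hW'⟩ := ih b h.2
    refine ⟨(SimpleGraph.Walk.cons h.1 W').copy rfl
      (List.getLast_cons (List.cons_ne_nil b t)).symm, ?_⟩
    simp [hW']

lemma walk_telescope {V F : Type*} {G : SimpleGraph V} [AddCommGroup F]
    (w : V → F) {u v : V} (W : G.Walk u v) :
    (W.darts.map (fun d => w d.toProd.2 - w d.toProd.1)).sum = w v - w u := by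
  induction W with
  | nil => simp
  | cons h W ih => simp [ih]

lemma dart_mem_infix {V : Type*} {G : SimpleGraph V} {u v : V} (W : G.Walk u v)
    (d : G.Dart) (hd : d ∈ W.darts) : [d.toProd.1, d.toProd.2] <:+: W.support := by
  induction W with
  | nil => simp at hd
  | cons h W ih =>
    rw [SimpleGraph.Walk.darts_cons, List.mem_cons] at hd
    rw [SimpleGraph.Walk.support_cons]
    rcases hd with rfl | hd
    · rw [W.support_eq_cons]
      exact ⟨[], W.support.tail, rfl⟩
    · exact (ih hd).trans (List.suffix_cons _ _).isInfix

lemma jensen_rpow {ι : Type*} (s : Finset ι) (f : ι → ℝ) (p c : ℝ)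
    (hf : ∀ i ∈ s, 0 ≤ f i) (hp : 1 ≤ p) (hc : (s.card : ℝ) ≤ c) :
    (∑ i ∈ s, f i) ^ p ≤ c ^ (p - 1) * ∑ i ∈ s, f i ^ p := by
  rcases s.eq_empty_or_nonempty with rfl | hs
  · simp [Real.zero_rpow (by linarith : p ≠ 0)]
  set n : ℝ := (s.card : ℝ) with hn
  have hn0 : (0:ℝ) < n := by rw [hn]; exact_mod_cast Finset.card_pos.mpr hs
  have key := Real.rpow_arith_mean_le_arith_mean_rpow s (fun _ => n⁻¹) f
      (fun i _ => by positivity)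
      (by simp [Finset.sum_const, nsmul_eq_mul, ← hn, mul_inv_cancel₀ hn0.ne'])
      hf hp
  have hsum : ∑ i ∈ s, f i = n * ∑ i ∈ s, n⁻¹ * f i := by
    rw [Finset.mul_sum]
    exact Finset.sum_congr rfl fun i _ => by field_simp
  have ht0 : 0 ≤ ∑ i ∈ s, n⁻¹ * f i :=
    Finset.sum_nonneg fun i hi => mul_nonneg (by positivity) (hf i hi)
  calc (∑ i ∈ s, f i) ^ p = n ^ p * (∑ i ∈ s, n⁻¹ * f i) ^ p := by
        rw [hsum, Real.mul_rpow hn0.le ht0]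
    _ ≤ n ^ p * ∑ i ∈ s, n⁻¹ * f i ^ p :=
        mul_le_mul_of_nonneg_left key (Real.rpow_nonneg hn0.le p)
    _ = n ^ (p - 1) * ∑ i ∈ s, f i ^ p := by
        rw [← Finset.mul_sum, Real.rpow_sub hn0, Real.rpow_one]
        field_simp
    _ ≤ c ^ (p - 1) * ∑ i ∈ s, f i ^ p := by
        refine mul_le_mul_of_nonneg_right (Real.rpow_le_rpow hn0.le hc (by linarith)) ?_
        exact Finset.sum_nonneg fun i hi => Real.rpow_nonneg (hf i hi) p

lemma edge_len {d : ℕ} {ζ : Set (EuclideanSpace ℝ (Fin (d+1)))} {ρ₂ ε : ℝ}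
    (hε : 0 < ε) (hes : EmptySpace ρ₂ ζ) {x y : EuclideanSpace ℝ (Fin (d+1))}
    (hxy : IsDEdge (scaleSet ε ζ) x y) : dist x y ≤ 2 * ρ₂ * ε := by
  obtain ⟨hne, s, ⟨hsub, hcard, c, r, hr, hmin⟩, hxs, hys⟩ := hxy
  obtain ⟨y₀, hy₀, hdy₀⟩ := hes (ε⁻¹ • c)
  have hmem : ε • y₀ ∈ scaleSet ε ζ := ⟨y₀, hy₀, rfl⟩
  have h1 : dist (ε • y₀) c ≤ ρ₂ * ε := by
    have h2 : dist (ε • y₀) (ε • (ε⁻¹ • c)) = ε * dist y₀ (ε⁻¹ • c) := by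
      rw [dist_smul₀, Real.norm_eq_abs, abs_of_pos hε, dist_comm]
    rw [smul_inv_smul₀ hε.ne'] at h2
    rw [h2]
    rw [dist_comm] at hdy₀
    nlinarith [dist_nonneg (x := y₀) (y := ε⁻¹ • c)]
  have hrle : r ≤ ρ₂ * ε := le_trans (hmin _ hmem) h1
  calc dist x y ≤ dist x c + dist c y := dist_triangle _ _ _
  _ = r + r := by rw [hr x hxs, dist_comm, hr y hys]
  _ ≤ 2*ρ₂*ε := by linarith

end Helpers

/-- Discrete Poincaré inequality on the Delaunay graph of `εζ` in a bounded Lipschitz open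
set `A`: if `w` vanishes on the boundary vertices, and every vertex in `Ā` is joined to a
boundary vertex by a Delaunay path with at most `c₁/ε` steps such that every edge is used by
at most `c₂/ε` paths, then
`Σ_x ε^{d+1} |w(x)|^p ≤ C Σ_{edges} ε^{d+1} (|w(y)-w(x)|/|y-x|)^p`
with `C` independent of `ε`. -/


theorem discrete_poincare (d n : ℕ) (p ρ₁ ρ₂ c₁ c₂ : ℝ)
    (hp : 1 < p) (h₁ : 0 < ρ₁) (h₁₂ : ρ₁ < ρ₂) (hc₁ : 0 < c₁) (hc₂ : 0 < c₂)
    (A : Set (EuclideanSpace ℝ (Fin (d + 1))))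
    (hAopen : IsOpen A) (hAlip : IsLipschitzSet A) :
    ∃ C : ℝ, 0 < C ∧
      ∀ ε : ℝ, 0 < ε →
      ∀ ζ : Set (EuclideanSpace ℝ (Fin (d + 1))),
        HardCore ρ₁ ζ → EmptySpace ρ₂ ζ → IsGeneral ζ →
      ∀ (hV : {x ∈ scaleSet ε ζ | x ∈ closure A}.Finite)
        (hE : {q : EuclideanSpace ℝ (Fin (d + 1)) × EuclideanSpace ℝ (Fin (d + 1)) |
          edgeRel (scaleSet ε ζ) A q.1 q.2}.Finite),
      ∀ w : EuclideanSpace ℝ (Fin (d + 1)) → EuclideanSpace ℝ (Fin n),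
        (∀ x ∈ bdryVerts (scaleSet ε ζ) A, w x = 0) →
      ∀ γ : EuclideanSpace ℝ (Fin (d + 1)) → List (EuclideanSpace ℝ (Fin (d + 1))),
        (∀ x ∈ {x ∈ scaleSet ε ζ | x ∈ closure A}, ∃ y l, γ x = y :: l ∧
          y ∈ bdryVerts (scaleSet ε ζ) A ∧
          (y :: l).getLast (List.cons_ne_nil y l) = x ∧
          List.Chain' (edgeRel (scaleSet ε ζ) A) (γ x) ∧
          ((γ x).length : ℝ) ≤ c₁ / ε) →
        (∀ a b : EuclideanSpace ℝ (Fin (d + 1)),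
          (({x ∈ scaleSet ε ζ | x ∈ closure A ∧ [a, b] <:+: γ x}.ncard : ℝ)) ≤ c₂ / ε) →
        ∑ x ∈ hV.toFinset, ε ^ (d + 1) * ‖w x‖ ^ p ≤
          C * ∑ q ∈ hE.toFinset, ε ^ (d + 1) * (‖w q.2 - w q.1‖ / ‖q.2 - q.1‖) ^ p := by
  classical
  have hρ₂ : 0 < ρ₂ := h₁.trans h₁₂
  refine ⟨(2 * ρ₂) ^ p * c₁ ^ (p - 1) * c₂, by positivity, ?_⟩
  intro ε hε ζ hhc hes hgen hV hE w hw0 γ hγ hover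
  set Z := scaleSet ε ζ with hZ
  let G : SimpleGraph (EuclideanSpace ℝ (Fin (d + 1))) :=
    { Adj := fun a b => edgeRel Z A a b
      symm := by
        constructor; rintro a b ⟨⟨hne, s, hs, ha, hb⟩, hseg⟩
        exact ⟨⟨hne.symm, s, hs, hb, ha⟩, by rwa [segment_symm]⟩
      loopless := by constructor; rintro a ⟨⟨hne, -⟩, -⟩; exact hne rfl }
  set gq : (EuclideanSpace ℝ (Fin (d+1)) × EuclideanSpace ℝ (Fin (d+1))) → ℝ :=
    fun q => ‖w q.2 - w q.1‖ / ‖q.2 - q.1‖ with hgq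
  have hgq0 : ∀ q, 0 ≤ gq q := fun q => div_nonneg (norm_nonneg _) (norm_nonneg _)
  have hp0 : 0 ≤ p := by linarith
  have key : ∀ x, x ∈ hV.toFinset → ∃ D : Finset G.Dart,
      (∀ dd ∈ D, [dd.toProd.1, dd.toProd.2] <:+: γ x ∧ dd.toProd ∈ hE.toFinset) ∧
      ((D.card : ℝ) ≤ c₁ / ε) ∧
      ‖w x‖ ≤ ∑ dd ∈ D, (2 * ρ₂ * ε) * gq dd.toProd := by
    intro x hx
    rw [Set.Finite.mem_toFinset] at hx
    obtain ⟨y, l, hyl, hybd, hlast, hchain, hlen⟩ := hγ x hx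
    rw [hyl] at hchain
    obtain ⟨W0, hW0s⟩ := walk_of_chain' G l y hchain
    set W : G.Walk y x := W0.copy rfl hlast with hWdef
    have hWs : W.support = γ x := by
      rw [hyl, hWdef, SimpleGraph.Walk.support_copy]; exact hW0s
    set P := W.bypass with hP
    have hPpath : P.IsPath := W.bypass_isPath
    have hPnodup : P.darts.Nodup := hPpath.isTrail.edges_nodup.of_map _
    refine ⟨P.darts.toFinset, ?_, ?_, ?_⟩
    · intro dd hdd
      rw [List.mem_toFinset] at hdd
      have hdW : dd ∈ W.darts := W.darts_bypass_subset hdd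
      refine ⟨by rw [← hWs]; exact dart_mem_infix W dd hdW, ?_⟩
      rw [Set.Finite.mem_toFinset]
      exact dd.adj
    · have h1 : P.darts.toFinset.card ≤ P.darts.length := List.toFinset_card_le _
      rw [SimpleGraph.Walk.length_darts] at h1
      have h2 : P.length ≤ W.length := W.length_bypass_le
      have h3 : W.support.length = W.length + 1 := W.length_support
      rw [hWs] at h3
      have h4 : P.darts.toFinset.card ≤ (γ x).length := by omega
      calc (P.darts.toFinset.card : ℝ) ≤ ((γ x).length : ℝ) := by exact_mod_cast h4
        _ ≤ c₁ / ε := hlen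
    · have hwy : w y = 0 := hw0 y hybd
      have htel := walk_telescope w P
      have hsum : ∑ dd ∈ P.darts.toFinset, (w dd.toProd.2 - w dd.toProd.1) = w x := by
        rw [List.sum_toFinset _ hPnodup, htel, hwy, sub_zero]
      rw [← hsum]
      refine (norm_sum_le _ _).trans (Finset.sum_le_sum ?_)
      intro dd hdd
      have hdne : dd.toProd.1 ≠ dd.toProd.2 := dd.adj.1.1
      have hnz : ‖dd.toProd.2 - dd.toProd.1‖ ≠ 0 := by
        simpa [sub_eq_zero] using (Ne.symm hdne)
      have hdist : ‖dd.toProd.2 - dd.toProd.1‖ ≤ 2 * ρ₂ * ε := by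
        have h5 : dist dd.toProd.2 dd.toProd.1 ≤ 2 * ρ₂ * ε := by
          rw [dist_comm]; exact edge_len hε hes dd.adj.1
        rwa [dist_eq_norm] at h5
      calc ‖w dd.toProd.2 - w dd.toProd.1‖
          = gq dd.toProd * ‖dd.toProd.2 - dd.toProd.1‖ := by
            rw [hgq]; exact (div_mul_cancel₀ _ hnz).symm
        _ ≤ gq dd.toProd * (2 * ρ₂ * ε) :=
            mul_le_mul_of_nonneg_left hdist (hgq0 _)
        _ = (2 * ρ₂ * ε) * gq dd.toProd := mul_comm _ _
  choose! D hD1 hD2 hD3 using key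
  have perx : ∀ x ∈ hV.toFinset, ε^(d+1) * ‖w x‖^p ≤
      (ε^(d+1) * ((c₁/ε)^(p-1) * (2*ρ₂*ε)^p)) *
        ∑ q ∈ hE.toFinset,
          (if q ∈ (D x).image SimpleGraph.Dart.toProd then gq q ^ p else 0) := by
    intro x hx
    have s1 : ‖w x‖^p ≤ (∑ dd ∈ D x, (2*ρ₂*ε) * gq dd.toProd)^p :=
      Real.rpow_le_rpow (norm_nonneg _) (hD3 x hx) hp0
    have s2 : (∑ dd ∈ D x, (2*ρ₂*ε) * gq dd.toProd)^p ≤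
        (c₁/ε)^(p-1) * ∑ dd ∈ D x, ((2*ρ₂*ε) * gq dd.toProd)^p :=
      jensen_rpow _ _ p _ (fun i _ => mul_nonneg (by positivity) (hgq0 _)) hp.le (hD2 x hx)
    have s3 : ∑ dd ∈ D x, ((2*ρ₂*ε) * gq dd.toProd)^p
        = (2*ρ₂*ε)^p * ∑ dd ∈ D x, gq dd.toProd ^ p := by
      rw [Finset.mul_sum]
      exact Finset.sum_congr rfl fun i _ => Real.mul_rpow (by positivity) (hgq0 _)
    have s4 : ∑ dd ∈ D x, gq dd.toProd ^ p
        = ∑ q ∈ (D x).image SimpleGraph.Dart.toProd, gq q ^ p :=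
      (Finset.sum_image (g := SimpleGraph.Dart.toProd) (f := fun q => gq q ^ p)
        (fun a _ b _ h => SimpleGraph.Dart.ext a b h)).symm
    have s5 : ∑ q ∈ (D x).image SimpleGraph.Dart.toProd, gq q ^ p
        = ∑ q ∈ hE.toFinset,
            (if q ∈ (D x).image SimpleGraph.Dart.toProd then gq q ^ p else 0) := by
      rw [Finset.sum_ite_mem, Finset.inter_eq_right.mpr ?_]
      intro q hq
      obtain ⟨dd, hdd, rfl⟩ := Finset.mem_image.mp hq
      exact (hD1 x hx dd hdd).2
    have hsumnn : 0 ≤ ∑ dd ∈ D x, gq dd.toProd ^ p :=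
      Finset.sum_nonneg fun i _ => Real.rpow_nonneg (hgq0 _) p
    have chain : ‖w x‖^p ≤ (c₁/ε)^(p-1) * ((2*ρ₂*ε)^p *
        ∑ q ∈ hE.toFinset,
          (if q ∈ (D x).image SimpleGraph.Dart.toProd then gq q ^ p else 0)) := by
      rw [← s5, ← s4]
      calc ‖w x‖^p ≤ (c₁/ε)^(p-1) * ∑ dd ∈ D x, ((2*ρ₂*ε) * gq dd.toProd)^p :=
            le_trans s1 s2
        _ = (c₁/ε)^(p-1) * ((2*ρ₂*ε)^p * ∑ dd ∈ D x, gq dd.toProd ^ p) := by rw [s3]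
    calc ε^(d+1) * ‖w x‖^p ≤ ε^(d+1) * ((c₁/ε)^(p-1) * ((2*ρ₂*ε)^p *
        ∑ q ∈ hE.toFinset,
          (if q ∈ (D x).image SimpleGraph.Dart.toProd then gq q ^ p else 0))) :=
        mul_le_mul_of_nonneg_left chain (by positivity)
      _ = _ := by ring
  have hswap : ∑ x ∈ hV.toFinset, ∑ q ∈ hE.toFinset,
        (if q ∈ (D x).image SimpleGraph.Dart.toProd then gq q ^ p else 0)
      = ∑ q ∈ hE.toFinset,
          ((hV.toFinset.filter fun x => q ∈ (D x).image SimpleGraph.Dart.toProd).card : ℝ)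
            * gq q ^ p := by
    rw [Finset.sum_comm]
    refine Finset.sum_congr rfl fun q _ => ?_
    rw [← Finset.sum_filter, Finset.sum_const, nsmul_eq_mul]
  have hcnt : ∀ q ∈ hE.toFinset,
      ((hV.toFinset.filter fun x => q ∈ (D x).image SimpleGraph.Dart.toProd).card : ℝ)
        ≤ c₂ / ε := by
    intro q _
    have hsub : ↑(hV.toFinset.filter fun x => q ∈ (D x).image SimpleGraph.Dart.toProd) ⊆
        {x ∈ scaleSet ε ζ | x ∈ closure A ∧ [q.1, q.2] <:+: γ x} := by
      intro x hx
      rw [Finset.mem_coe, Finset.mem_filter] at hx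
      obtain ⟨hxV, hq⟩ := hx
      obtain ⟨dd, hdd, hdq⟩ := Finset.mem_image.mp hq
      have h := (hD1 x hxV dd hdd).1
      rw [hdq] at h
      have hxV' := hV.mem_toFinset.mp hxV
      exact ⟨hxV'.1, hxV'.2, h⟩
    have hfin : ({x ∈ scaleSet ε ζ | x ∈ closure A ∧ [q.1, q.2] <:+: γ x}).Finite :=
      hV.subset (fun x hx => ⟨hx.1, hx.2.1⟩)
    have h6 := Set.ncard_le_ncard hsub hfin
    rw [Set.ncard_coe_finset] at h6
    exact le_trans (by exact_mod_cast h6) (hover q.1 q.2)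
  have hconst : (ε^(d+1) * ((c₁/ε)^(p-1) * (2*ρ₂*ε)^p)) * (c₂/ε)
      = ((2*ρ₂)^p * c₁^(p-1) * c₂) * ε^(d+1) := by
    have e1 : (c₁/ε)^(p-1) = c₁^(p-1) / ε^(p-1) := Real.div_rpow hc₁.le hε.le (p-1)
    have e2 : (2*ρ₂*ε)^p = (2*ρ₂)^p * ε^p := Real.mul_rpow (by positivity) hε.le
    have e3 : ε^p = ε^(p-1) * ε := by
      rw [← Real.rpow_add_one hε.ne' (p-1)]; congr 1; ring
    rw [e1, e2, e3]
    have h4 : ε^(p-1) ≠ 0 := (Real.rpow_pos_of_pos hε _).ne'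
    field_simp
  calc ∑ x ∈ hV.toFinset, ε ^ (d + 1) * ‖w x‖ ^ p
      ≤ ∑ x ∈ hV.toFinset, (ε^(d+1) * ((c₁/ε)^(p-1) * (2*ρ₂*ε)^p)) *
          ∑ q ∈ hE.toFinset,
            (if q ∈ (D x).image SimpleGraph.Dart.toProd then gq q ^ p else 0) :=
        Finset.sum_le_sum perx
    _ = (ε^(d+1) * ((c₁/ε)^(p-1) * (2*ρ₂*ε)^p)) * ∑ q ∈ hE.toFinset,
          ((hV.toFinset.filter fun x => q ∈ (D x).image SimpleGraph.Dart.toProd).card : ℝ)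
            * gq q ^ p := by
        rw [← Finset.mul_sum, hswap]
    _ ≤ (ε^(d+1) * ((c₁/ε)^(p-1) * (2*ρ₂*ε)^p)) * ∑ q ∈ hE.toFinset, (c₂/ε) * gq q ^ p := by
        refine mul_le_mul_of_nonneg_left (Finset.sum_le_sum fun q hq => ?_) (by positivity)
        exact mul_le_mul_of_nonneg_right (hcnt q hq) (Real.rpow_nonneg (hgq0 q) p)
    _ = ((2*ρ₂)^p * c₁^(p-1) * c₂) * ∑ q ∈ hE.toFinset,
          ε ^ (d + 1) * (‖w q.2 - w q.1‖ / ‖q.2 - q.1‖) ^ p := by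
        have lhs_eq : ∑ q ∈ hE.toFinset, (c₂/ε) * gq q ^ p
            = (c₂/ε) * ∑ q ∈ hE.toFinset, gq q ^ p := by rw [Finset.mul_sum]
        have rhs_eq : ∑ q ∈ hE.toFinset,
              ε ^ (d + 1) * (‖w q.2 - w q.1‖ / ‖q.2 - q.1‖) ^ p
            = ε^(d+1) * ∑ q ∈ hE.toFinset, gq q ^ p := by
          rw [Finset.mul_sum]
        rw [lhs_eq, rhs_eq, ← mul_assoc, hconst, mul_assoc]
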